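/- Let K be a commutative ring with 2 invertible, u_1,...,u_a ∈ K, f(t) = ∏_{i=1}^a (t - u_i) = Σ_{j=0}^a b_j t^j, and suppose ω : ℕ → K is u-admissible (i.e. 1 - t/2 + Σ_{i≥0} ω_i t^{i+1} = (1 - (-1)^a t/2) ∏_{i=1}^a (1+u_i t)/(1-u_i t) in K[[t]]). Then for every k ≥ a, ω_k = -Σ_{j=1}^{a} b_{a-j} ω_{k-j}. -/

import Mathlib

open PowerSeries

lemma coeff_prod_one_add_aux {K : Type*} [CommRing K] {a : ℕ} (c : Fin a → K) (n : ℕ) :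
    PowerSeries.coeff (R := K) n (∏ i : Fin a, (1 + PowerSeries.C (R := K) (c i) * PowerSeries.X)) =
      ∑ t ∈ Finset.powersetCard n (Finset.univ : Finset (Fin a)), ∏ i ∈ t, c i := by
  have h : ∏ i : Fin a, (1 + PowerSeries.C (R := K) (c i) * PowerSeries.X)
      = ∑ t ∈ (Finset.univ : Finset (Fin a)).powerset,
          PowerSeries.C (R := K) (∏ i ∈ t, c i) * PowerSeries.X ^ t.card := by
    rw [Finset.prod_congr rfl fun i (_ : i ∈ Finset.univ) =>
      add_comm 1 (PowerSeries.C (R := K) (c i) * PowerSeries.X), Finset.prod_add]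
    refine Finset.sum_congr rfl fun t _ => ?_
    rw [Finset.prod_const_one, mul_one, Finset.prod_mul_distrib, Finset.prod_const, map_prod]
  rw [h, map_sum]
  simp_rw [PowerSeries.coeff_C_mul, PowerSeries.coeff_X_pow]
  rw [Finset.powersetCard_eq_filter, Finset.sum_filter]
  refine Finset.sum_congr rfl fun t _ => ?_
  by_cases h : t.card = n
  · simp [h]
  · rw [if_neg (fun hn => h hn.symm), if_neg h, mul_zero]

/-- If `f(t) = ∏ (t - u_i) = Σ_{j=0}^a b_j t^j` and `ω` is u-admissible, then
`ω_k = -Σ_{j=1}^a b_{a-j} ω_{k-j}` for every `k ≥ a` (weak admissibility). -/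
theorem u_admissible_implies_weakly_admissible (K : Type*) [CommRing K] [Invertible (2 : K)]
    (a : ℕ) (u : Fin a → K) (ω b : ℕ → K)
    (hb : (∏ i : Fin a, (Polynomial.X - Polynomial.C (u i)))
        = ∑ j ∈ Finset.range (a + 1), Polynomial.C (b j) * Polynomial.X ^ j)
    (hadm : (1 - PowerSeries.C (R := K) (⅟2) * PowerSeries.X
          + PowerSeries.mk (fun n => if n = 0 then 0 else ω (n - 1)))
        * ∏ i : Fin a, (1 - PowerSeries.C (R := K) (u i) * PowerSeries.X)
      = (1 - PowerSeries.C (R := K) ((-1) ^ a * ⅟2) * PowerSeries.X)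
        * ∏ i : Fin a, (1 + PowerSeries.C (R := K) (u i) * PowerSeries.X)) :
    ∀ k : ℕ, a ≤ k → ω k = -∑ j ∈ Finset.Icc 1 a, b (a - j) * ω (k - j) := by
  classical
  set E : ℕ → K := fun n => ∑ t ∈ Finset.powersetCard n (Finset.univ : Finset (Fin a)),
    ∏ i ∈ t, u i with hE
  have hE0 : E 0 = 1 := by simp [hE]
  have hEgt : ∀ n, a < n → E n = 0 := by
    intro n hn
    have : Finset.powersetCard n (Finset.univ : Finset (Fin a)) = ∅ := by
      rw [Finset.powersetCard_eq_empty]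
      simpa using hn
    simp [hE, this]
  -- coefficients of H = ∏ (1 + u_i X)
  have hH : ∀ n, PowerSeries.coeff (R := K) n
      (∏ i : Fin a, (1 + PowerSeries.C (R := K) (u i) * PowerSeries.X)) = E n :=
    fun n => coeff_prod_one_add_aux u n
  -- coefficients of G = ∏ (1 - u_i X)
  have hG : ∀ n, PowerSeries.coeff (R := K) n
      (∏ i : Fin a, (1 - PowerSeries.C (R := K) (u i) * PowerSeries.X)) = (-1) ^ n * E n := by
    intro n
    have h1 : (∏ i : Fin a, (1 - PowerSeries.C (R := K) (u i) * PowerSeries.X))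
        = ∏ i : Fin a, (1 + PowerSeries.C (R := K) ((fun i => -u i) i) * PowerSeries.X) := by
      refine Finset.prod_congr rfl fun i _ => ?_
      rw [sub_eq_add_neg, map_neg, neg_mul]
    rw [h1, coeff_prod_one_add_aux, hE, Finset.mul_sum]
    refine Finset.sum_congr rfl fun t ht => ?_
    have hc : t.card = n := (Finset.mem_powersetCard.mp ht).2
    have h2 : ∏ i ∈ t, -u i = (-1) ^ t.card * ∏ i ∈ t, u i := by
      rw [← Finset.prod_const, ← Finset.prod_mul_distrib]
      simp
    rw [h2, hc]
  -- the coefficients b in terms of E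
  have hbE : ∀ m, m ≤ a → b m = (-1) ^ (a - m) * E (a - m) := by
    intro m hm
    have h1 : ((∏ i : Fin a, (Polynomial.X - Polynomial.C (u i))).coeff m)
        = (-1 : K) ^ (a - m) * E (a - m) := by
      have h2 : (∏ i : Fin a, (Polynomial.X - Polynomial.C (u i)))
          = (((Finset.univ : Finset (Fin a)).val.map u).map
              (fun t => Polynomial.X - Polynomial.C t)).prod := by
        rw [Multiset.map_map]; rfl
      have hcard : Multiset.card ((Finset.univ : Finset (Fin a)).val.map u) = a := by
        simp
      rw [h2, Multiset.prod_X_sub_C_coeff _ (by rw [hcard]; exact hm), hcard,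
        Finset.esymm_map_val]
    have h3 : ((∑ j ∈ Finset.range (a + 1),
        Polynomial.C (b j) * Polynomial.X ^ j).coeff m) = b m := by
      rw [Polynomial.finset_sum_coeff]
      simp_rw [Polynomial.coeff_C_mul, Polynomial.coeff_X_pow]
      rw [Finset.sum_eq_single m]
      · simp
      · intro j _ hj; simp [Ne.symm hj]
      · intro hmem; exact absurd (Finset.mem_range.mpr (Nat.lt_succ_of_le hm)) hmem
    rw [← h3, ← hb, h1]
  intro k hk
  -- apply coeff at k+1 to hadm
  have h := congrArg (PowerSeries.coeff (R := K) (k + 1)) hadm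
  rw [mul_comm] at h
  rw [PowerSeries.coeff_mul, Finset.Nat.sum_antidiagonal_eq_sum_range_succ_mk] at h
  -- compute coefficients of A
  have hA : ∀ n : ℕ, PowerSeries.coeff (R := K) n
      (1 - PowerSeries.C (R := K) (⅟2 : K) * PowerSeries.X
        + PowerSeries.mk (fun n => if n = 0 then 0 else ω (n - 1)))
      = (if n = 0 then (1 : K) else 0) - (if n = 1 then (⅟2 : K) else 0)
        + (if n = 0 then 0 else ω (n - 1)) := by
    intro n
    rw [map_add, map_sub, PowerSeries.coeff_one, PowerSeries.coeff_C_mul,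
      PowerSeries.coeff_X, PowerSeries.coeff_mk]
    simp [mul_ite]
  simp_rw [hG, hA] at h
  -- RHS of h
  have hR : PowerSeries.coeff (R := K) (k + 1)
      ((1 - PowerSeries.C (R := K) ((-1) ^ a * ⅟2) * PowerSeries.X)
        * ∏ i : Fin a, (1 + PowerSeries.C (R := K) (u i) * PowerSeries.X))
      = -((-1) ^ a * (⅟2 : K)) * E k := by
    rw [sub_mul, one_mul, map_sub, mul_assoc, PowerSeries.coeff_C_mul,
      PowerSeries.coeff_succ_X_mul, hH, hH, hEgt _ (Nat.lt_succ_of_le hk)]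
    ring
  rw [hR] at h
  -- restrict the sum to range (a+1)
  have hsub : ∑ i ∈ Finset.range (k + 2), (-1 : K) ^ i * E i *
        ((if k + 1 - i = 0 then (1 : K) else 0) - (if k + 1 - i = 1 then (⅟2 : K) else 0)
          + (if k + 1 - i = 0 then 0 else ω (k + 1 - i - 1)))
      = ∑ i ∈ Finset.range (a + 1), (-1 : K) ^ i * E i *
        ((if k + 1 - i = 0 then (1 : K) else 0) - (if k + 1 - i = 1 then (⅟2 : K) else 0)
          + (if k + 1 - i = 0 then 0 else ω (k + 1 - i - 1))) := by
    symm
    refine Finset.sum_subset ?_ ?_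
    · intro i hi
      rw [Finset.mem_range] at hi ⊢
      omega
    · intro i _ hi
      rw [Finset.mem_range, not_lt] at hi
      rw [hEgt i (by omega)]
      ring
  rw [hsub] at h
  -- simplify each term for i ≤ a
  have hterm : ∀ i ∈ Finset.range (a + 1), (-1 : K) ^ i * E i *
        ((if k + 1 - i = 0 then (1 : K) else 0) - (if k + 1 - i = 1 then (⅟2 : K) else 0)
          + (if k + 1 - i = 0 then 0 else ω (k + 1 - i - 1)))
      = (-1 : K) ^ i * E i * ω (k - i)
        - (if i = k then (-1 : K) ^ i * E i * (⅟2 : K) else 0) := by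
    intro i hi
    rw [Finset.mem_range] at hi
    have h0 : k + 1 - i ≠ 0 := by omega
    have h1 : k + 1 - i - 1 = k - i := by omega
    have h2 : (k + 1 - i = 1) ↔ i = k := by omega
    rw [if_neg h0, if_neg h0, h1]
    simp only [h2]
    by_cases hik : i = k <;> simp [hik] <;> ring
  rw [Finset.sum_congr rfl hterm, Finset.sum_sub_distrib, Finset.sum_ite_eq'] at h
  -- obtain the key identity
  have hif : (if k ∈ Finset.range (a + 1) then (-1 : K) ^ k * E k * ⅟2 else 0)
      = (-1 : K) ^ a * ⅟2 * E k := by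
    rcases eq_or_lt_of_le hk with hak | hak
    · rw [if_pos (by rw [Finset.mem_range]; omega), ← hak]; ring
    · rw [if_neg (by rw [Finset.mem_range]; omega), hEgt k hak, mul_zero]
  rw [hif] at h
  have key : ∑ i ∈ Finset.range (a + 1), (-1 : K) ^ i * E i * ω (k - i) = 0 := by
    linear_combination h
  -- peel off the i = 0 term
  rw [Finset.sum_range_succ'] at key
  simp only [pow_zero, hE0, one_mul, Nat.sub_zero, mul_one] at key
  have hωk : ω k = -∑ i ∈ Finset.range a, (-1 : K) ^ (i + 1) * E (i + 1) * ω (k - (i + 1)) := by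
    linear_combination key
  rw [hωk, show Finset.Icc 1 a = Finset.Ico 1 (a + 1) from by rw [Finset.Ico_add_one_right_eq_Icc],
    Finset.sum_Ico_eq_sum_range]
  congr 1
  refine Finset.sum_congr (by norm_num) fun i hi => ?_
  rw [Finset.mem_range] at hi
  have h1 : 1 + i ≤ a := by omega
  rw [hbE (a - (1 + i)) (Nat.sub_le _ _), Nat.sub_sub_self h1, add_comm 1 i]
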